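/- Let G = (B,E) be a graph on n vertices and k a positive integer. Consider the election with candidates C = B ∪ {w} and 2n+k voters: for each i ≤ n a voter v_i approving N_c[b_i]; for each i ≤ n a voter approving B − N_c[b_i] then w; and k voters approving nothing. Then G has a dominating set of size at most k if and only if w can be made the unique fallback voting winner by deleting at most k voters. -/

import Mathlib

/- Fallback voting framework.  A ballot is the linearly ordered list of a voter's
approved candidates (most preferred first); an election is a list of ballots. -/
namespace FV

variable {α : Type*} [DecidableEq α]

/-- The level-`i` score of candidate `c`: the number of voters who approve `c`
and rank `c` among their top `i` approved candidates. -/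
def levelScore (V : List (List α)) (i : ℕ) (c : α) : ℕ :=
  (V.filter (fun b => decide (c ∈ b.take i))).length

/-- The overall approval score of candidate `c`. -/
def score (V : List (List α)) (c : α) : ℕ :=
  (V.filter (fun b => decide (c ∈ b))).length

/-- `c` has a strict majority of approvals at level `i`. -/
def MajAt (V : List (List α)) (i : ℕ) (c : α) : Prop :=
  2 * levelScore V i c > V.length

/-- `c` is a fallback voting winner of the election with candidate set `Cs`
and voter list `V`:  either at the first level (up to `‖Cs‖`) at which some
candidate attains a strict majority, `c` has a strict majority and maximal
level score among strict-majority candidates; or no candidate ever attains a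
strict majority and `c` has maximal overall approval score. -/
def FVWinner (Cs : Finset α) (V : List (List α)) (c : α) : Prop :=
  c ∈ Cs ∧
    ((∃ i, 1 ≤ i ∧ i ≤ Cs.card ∧ MajAt V i c ∧
        (∀ j, j < i → ∀ d ∈ Cs, ¬ MajAt V j d) ∧
        (∀ d ∈ Cs, MajAt V i d → levelScore V i d ≤ levelScore V i c)) ∨
     ((∀ i, i ≤ Cs.card → ∀ d ∈ Cs, ¬ MajAt V i d) ∧
        ∀ d ∈ Cs, score V d ≤ score V c))

/-- `c` is the unique fallback voting winner. -/
def UniqueFVWinner (Cs : Finset α) (V : List (List α)) (c : α) : Prop :=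
  FVWinner Cs V c ∧ ∀ d, FVWinner Cs V d → d = c

end FV

/- The deleting-voters construction.  Candidates are `Option (Fin n)`:
`some b` is the vertex candidate for `b` and `none` is the distinguished
candidate `w`.  For each `i`, voter `vᵢ` approves the candidates of
`N_c[bᵢ]` (enumerated by `M i`); for each `i` there is a voter approving
`B − N_c[bᵢ]` (enumerated by `L i`) followed by `w`; and there are `k`
voters approving nothing. -/
namespace DV

/-- The ballot of voter `vᵢ`, approving `N_c[bᵢ]`. -/
def vballot {n : ℕ} (M : Fin n → List (Fin n)) (i : Fin n) : List (Option (Fin n)) :=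
  (M i).map some

/-- The ballot approving `B − N_c[bᵢ]` and then `w`. -/
def wballot {n : ℕ} (L : Fin n → List (Fin n)) (i : Fin n) : List (Option (Fin n)) :=
  (L i).map some ++ [none]

/-- The full voter list of the construction. -/
def delElection {n : ℕ} (k : ℕ) (M L : Fin n → List (Fin n)) :
    List (List (Option (Fin n))) :=
  (List.finRange n).map (vballot M) ++ (List.finRange n).map (wballot L) ++
    List.replicate k ([] : List (Option (Fin n)))

/-- The voter list obtained by deleting exactly the voters `vᵢ` for `i ∈ B'`. -/
def delElectionMinus {n : ℕ} (k : ℕ) (M L : Fin n → List (Fin n))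
    (B' : Finset (Fin n)) : List (List (Option (Fin n))) :=
  ((List.finRange n).filter (fun i => decide (i ∉ B'))).map (vballot M) ++
    (List.finRange n).map (wballot L) ++
    List.replicate k ([] : List (Option (Fin n)))

end DV


section Helpers

open List FV DV

variable {α : Type*} [DecidableEq α]

lemma score_eq_countP (V : List (List α)) (c : α) :
    score V c = V.countP (fun b => decide (c ∈ b)) :=
  List.countP_eq_length_filter.symm

lemma score_append (V W : List (List α)) (c : α) :
    score (V ++ W) c = score V c + score W c := by
  simp [score_eq_countP, List.countP_append]

lemma levelScore_le_score (V : List (List α)) (i : ℕ) (c : α) :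
    levelScore V i c ≤ score V c := by
  rw [levelScore, score, ← List.countP_eq_length_filter, ← List.countP_eq_length_filter]
  refine List.countP_mono_left (fun b _ h => ?_)
  simp only [decide_eq_true_eq] at h ⊢
  exact List.take_subset i _ h

lemma score_vmap {n : ℕ} (M : Fin n → List (Fin n)) (l : List (Fin n)) (b : Fin n) :
    score (l.map (vballot M)) (some b) = l.countP (fun i => decide (b ∈ M i)) := by
  rw [score_eq_countP, List.countP_map]
  exact List.countP_congr (fun i _ => by simp [vballot, Function.comp])

lemma score_vmap_none {n : ℕ} (M : Fin n → List (Fin n)) (l : List (Fin n)) :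
    score (l.map (vballot M)) none = 0 := by
  rw [score_eq_countP, List.countP_map, List.countP_eq_zero]
  intro i _
  simp [vballot, Function.comp]

lemma score_wmap {n : ℕ} (L : Fin n → List (Fin n)) (l : List (Fin n)) (b : Fin n) :
    score (l.map (wballot L)) (some b) = l.countP (fun i => decide (b ∈ L i)) := by
  rw [score_eq_countP, List.countP_map]
  exact List.countP_congr (fun i _ => by simp [wballot, Function.comp])

lemma score_wmap_none {n : ℕ} (L : Fin n → List (Fin n)) (l : List (Fin n)) :
    score (l.map (wballot L)) none = l.length := by
  rw [score_eq_countP, List.countP_map, List.countP_eq_length]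
  intro i _
  simp [wballot, Function.comp]

lemma score_replicate_nil (k : ℕ) (c : α) :
    score (List.replicate k ([] : List α)) c = 0 := by
  rw [score_eq_countP, List.countP_eq_zero]
  intro b hb
  simp [List.eq_of_mem_replicate hb]

lemma countP_nodup_card {n : ℕ} {l : List (Fin n)} (hl : l.Nodup) (p : Fin n → Bool) :
    l.countP p = (l.toFinset.filter (fun i => p i)).card := by
  rw [List.countP_eq_length_filter, ← List.toFinset_filter,
    List.toFinset_card_of_nodup (hl.filter _)]

lemma countP_le_countP_sublist {β : Type*} {l' l : List β} (p : β → Bool) (h : l' <+ l) :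
    l.countP p ≤ l'.countP p + (l.length - l'.length) := by
  induction h with
  | slnil => simp
  | cons a h ih =>
      have := h.length_le
      simp only [List.countP_cons, List.length_cons]
      rcases Bool.eq_false_or_eq_true (p a) with hpa | hpa <;> simp [hpa] <;> omega
  | cons_cons a h ih =>
      have := h.length_le
      simp only [List.countP_cons, List.length_cons]
      rcases Bool.eq_false_or_eq_true (p a) with hpa | hpa <;> simp [hpa] <;> omega

lemma countP_split {β : Type*} (l : List β) (p q : β → Bool) :
    l.countP p = l.countP (fun a => p a && q a) + l.countP (fun a => p a && !q a) := by
  have h1 := List.length_eq_countP_add_countP q (l := l.filter p)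
  rw [List.countP_filter, List.countP_filter, ← List.countP_eq_length_filter] at h1
  rw [h1]
  congr 1
  · exact List.countP_congr (fun a _ => by cases p a <;> cases q a <;> simp)
  · exact List.countP_congr (fun a _ => by cases p a <;> cases q a <;> simp)

end Helpers

/-- `G` has a dominating set of size at most `k` iff `w` can be
made the unique fallback voting winner by deleting at most `k` voters.  Here
`M i` enumerates `N_c[bᵢ]` and `L i` enumerates `B − N_c[bᵢ]`. -/
theorem fv_constructive_deleting_voters {n k : ℕ} (hk : 0 < k)
    (G : SimpleGraph (Fin n)) [DecidableRel G.Adj]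
    (M L : Fin n → List (Fin n))
    (hMnd : ∀ i, (M i).Nodup) (hLnd : ∀ i, (L i).Nodup)
    (hMmem : ∀ i b, b ∈ M i ↔ (b = i ∨ G.Adj i b))
    (hLmem : ∀ i b, b ∈ L i ↔ ¬ (b = i ∨ G.Adj i b)) :
    (∃ B' : Finset (Fin n), B'.card ≤ k ∧ ∀ u, ∃ v ∈ B', u = v ∨ G.Adj v u) ↔
    (∃ V' : List (List (Option (Fin n))), V'.Sublist (DV.delElection k M L) ∧
      (DV.delElection k M L).length ≤ V'.length + k ∧
      FV.UniqueFVWinner Finset.univ V' (none : Option (Fin n))) := by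
  classical
  have key : ∀ u : Fin n,
      (List.finRange n).countP (fun i => decide (u ∈ M i))
        + (List.finRange n).countP (fun i => decide (u ∈ L i)) = n := by
    intro u
    rw [countP_nodup_card (List.nodup_finRange n), countP_nodup_card (List.nodup_finRange n),
      List.toFinset_finRange]
    have e1 : Finset.univ.filter (fun i : Fin n => decide (u ∈ M i) = true)
        = Finset.univ.filter (fun i : Fin n => u ∈ M i) := by
      ext i; simp
    have e2 : Finset.univ.filter (fun i : Fin n => decide (u ∈ L i) = true)
        = Finset.univ \ Finset.univ.filter (fun i : Fin n => u ∈ M i) := by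
      ext i
      simp only [Finset.mem_filter, Finset.mem_sdiff, Finset.mem_univ, true_and,
        decide_eq_true_eq, hLmem i u, hMmem i u]
    rw [e1, e2, Finset.card_sdiff_of_subset (Finset.filter_subset _ _)]
    have h1 : (Finset.univ.filter (fun i : Fin n => u ∈ M i)).card ≤ n := by
      simpa using Finset.card_le_univ (Finset.univ.filter (fun i : Fin n => u ∈ M i))
    have h2 : (Finset.univ : Finset (Fin n)).card = n := by simp
    omega
  constructor
  · -- dominating set → deletion of voters makes w unique winner
    rintro ⟨B', hBk, hdom⟩
    have hBn : B'.card ≤ n := by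
      simpa using Finset.card_le_univ B'
    have hfl : ((List.finRange n).filter (fun i => decide (i ∉ B'))).length = n - B'.card := by
      rw [← List.countP_eq_length_filter, countP_nodup_card (List.nodup_finRange n),
        List.toFinset_finRange]
      have e1 : Finset.univ.filter (fun i : Fin n => decide (i ∉ B') = true)
          = Finset.univ \ B' := by
        ext i; simp
      rw [e1, Finset.card_sdiff_of_subset (Finset.subset_univ _)]
      simp
    refine ⟨DV.delElectionMinus k M L B', ?_, ?_, ?_⟩
    · unfold DV.delElection DV.delElectionMinus
      exact (((List.filter_sublist).map _).append (List.Sublist.refl _)).append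
        (List.Sublist.refl _)
    · unfold DV.delElection DV.delElectionMinus
      simp only [List.length_append, List.length_map, List.length_finRange,
        List.length_replicate, hfl]
      omega
    · -- unique FV winner
      set V' := DV.delElectionMinus k M L B' with hV'
      have hlenV : V'.length = (n - B'.card) + n + k := by
        rw [hV']
        unfold DV.delElectionMinus
        simp only [List.length_append, List.length_map, List.length_finRange,
          List.length_replicate, hfl]
        try omega
      have hscore_none : FV.score V' none = n := by
        rw [hV']
        unfold DV.delElectionMinus
        rw [score_append, score_append, score_vmap_none, score_wmap_none, score_replicate_nil]
        try simp
      have hscore_some : ∀ b : Fin n, FV.score V' (some b) + 1 ≤ n := by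
        intro b
        have hcount : FV.score V' (some b)
            = ((List.finRange n).filter (fun i => decide (i ∉ B'))).countP
                (fun i => decide (b ∈ M i))
              + (List.finRange n).countP (fun i => decide (b ∈ L i)) := by
          rw [hV']
          unfold DV.delElectionMinus
          rw [score_append, score_append, score_vmap, score_wmap, score_replicate_nil]
          omega
        have hfilter : ((List.finRange n).filter (fun i => decide (i ∉ B'))).countP
              (fun i => decide (b ∈ M i))
            = (List.finRange n).countP
              (fun i => decide (b ∈ M i) && decide (i ∉ B')) :=
          List.countP_filter
        have hsplit := countP_split (List.finRange n) (fun i => decide (b ∈ M i))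
          (fun i => decide (i ∉ B'))
        have hpos : 0 < (List.finRange n).countP
            (fun i => decide (b ∈ M i) && !(decide (i ∉ B'))) := by
          rw [List.countP_pos_iff]
          obtain ⟨v, hvB, hvd⟩ := hdom b
          exact ⟨v, List.mem_finRange v, by simp [(hMmem v b).mpr hvd, hvB]⟩
        have hML := key b
        rw [hcount, hfilter]
        omega
      have hnomaj : ∀ i : ℕ, ∀ d : Option (Fin n), ¬ FV.MajAt V' i d := by
        intro i d hmaj
        have hmaj' : 2 * FV.levelScore V' i d > V'.length := hmaj
        have hls : FV.levelScore V' i d ≤ n := by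
          refine le_trans (levelScore_le_score V' i d) ?_
          cases d with
          | none => rw [hscore_none]
          | some b => have := hscore_some b; omega
        rw [hlenV] at hmaj'
        omega
      refine ⟨⟨Finset.mem_univ _, Or.inr ⟨fun i _ d _ => hnomaj i d, fun d _ => ?_⟩⟩, ?_⟩
      · cases d with
        | none => exact le_refl _
        | some b => have := hscore_some b; rw [hscore_none]; omega
      · rintro d ⟨-, hd | ⟨-, hmax⟩⟩
        · obtain ⟨i, -, -, hmaj, -, -⟩ := hd
          exact absurd hmaj (hnomaj i d)
        · have hn := hmax none (Finset.mem_univ _)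
          rw [hscore_none] at hn
          cases d with
          | none => rfl
          | some b => have := hscore_some b; omega
  · -- deletion of voters → dominating set
    rintro ⟨V', hsub, hlen, hw, huniq⟩
    unfold DV.delElection at hsub hlen
    obtain ⟨AW, E', rfl, hAW, hE⟩ := List.sublist_append_iff.mp hsub
    obtain ⟨A', W', rfl, hA, hW⟩ := List.sublist_append_iff.mp hAW
    obtain ⟨s, hs, rfl⟩ := List.sublist_map_iff.mp hA
    obtain ⟨t, ht, rfl⟩ := List.sublist_map_iff.mp hW
    obtain ⟨e, he, rfl⟩ := List.sublist_replicate_iff.mp hE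
    have hsn : s.length ≤ n := by simpa using hs.length_le
    have htn : t.length ≤ n := by simpa using ht.length_le
    simp only [List.length_append, List.length_map, List.length_finRange,
      List.length_replicate] at hlen
    set V' := s.map (DV.vballot M) ++ t.map (DV.wballot L) ++ List.replicate e
      ([] : List (Option (Fin n))) with hV'
    have hlenV : V'.length = s.length + t.length + e := by
      rw [hV']; simp; omega
    have hscore_none : FV.score V' none = t.length := by
      rw [hV', score_append, score_append, score_vmap_none, score_wmap_none,
        score_replicate_nil]
      omega
    -- w wins via the no-majority branch
    obtain ⟨-, hw1 | ⟨hnomaj, hmax⟩⟩ := hw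
    · exfalso
      obtain ⟨i, -, -, hmaj, -, -⟩ := hw1
      have hmaj' : 2 * FV.levelScore V' i none > V'.length := hmaj
      have hls := levelScore_le_score V' i (none : Option (Fin n))
      rw [hscore_none] at hls
      rw [hlenV] at hmaj'
      omega
    · have hsnd : s.Nodup := hs.nodup (List.nodup_finRange n)
      refine ⟨Finset.univ \ s.toFinset, ?_, ?_⟩
      · rw [Finset.card_sdiff_of_subset (Finset.subset_univ _), List.toFinset_card_of_nodup hsnd]
        simp only [Finset.card_univ, Fintype.card_fin]
        omega
      · intro u
        by_contra hne
        push_neg at hne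
        -- every closed neighbor of u is in s
        have hnbr : ∀ v : Fin n, u ∈ M v → v ∈ s.toFinset := by
          intro v hv
          by_contra hvs
          have hmem : v ∈ Finset.univ \ s.toFinset :=
            Finset.mem_sdiff.mpr ⟨Finset.mem_univ v, hvs⟩
          rcases (hMmem v u).mp hv with h | h
          · exact (hne v hmem).1 h
          · exact (hne v hmem).2 h
        have hcMs : (List.finRange n).countP (fun i => decide (u ∈ M i))
            ≤ s.countP (fun i => decide (u ∈ M i)) := by
          rw [countP_nodup_card (List.nodup_finRange n), countP_nodup_card hsnd,
            List.toFinset_finRange]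
          refine Finset.card_le_card ?_
          intro v hv
          simp only [Finset.mem_filter, Finset.mem_univ, true_and,
            decide_eq_true_eq] at hv ⊢
          exact ⟨hnbr v hv, hv⟩
        have hcLt := countP_le_countP_sublist (fun i => decide (u ∈ L i)) ht
        simp only [List.length_finRange] at hcLt
        have hML := key u
        have hscore_u : FV.score V' (some u)
            = s.countP (fun i => decide (u ∈ M i)) + t.countP (fun i => decide (u ∈ L i)) := by
          rw [hV', score_append, score_append, score_vmap, score_wmap, score_replicate_nil]
          omega
        have hsc : FV.score V' none ≤ FV.score V' (some u) := by
          rw [hscore_none, hscore_u]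
          omega
        have hwin : FV.FVWinner Finset.univ V' (some u) :=
          ⟨Finset.mem_univ _, Or.inr ⟨hnomaj, fun d hd =>
            le_trans (hmax d hd) hsc⟩⟩
        exact Option.some_ne_none u (huniq _ hwin)
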